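/- Let ω = ℝ^ℕ carry the product topology and let A : ω → ω be the backward shift, A(x₀, x₁, x₂, …) = (x₁, x₂, x₃, …). Then A is a continuous linear operator on ω but A is not the generator of any strongly continuous semigroup on ω. -/

import Mathlib

open Filter Topology Set

private lemma stmt9_deriv (A : (ℕ → ℝ) → (ℕ → ℝ))
    (T : ℝ → (ℕ → ℝ) →L[ℝ] (ℕ → ℝ))
    (hsemi : ∀ s t : ℝ, 0 ≤ s → 0 ≤ t → T (s + t) = (T s).comp (T t))
    (hgen : ∀ x : ℕ → ℝ,
      Tendsto (fun h : ℝ => h⁻¹ • (T h x - x)) (𝓝[>] 0) (𝓝 (A x)))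
    (x : ℕ → ℝ) (t : ℝ) (ht : 0 ≤ t) (j : ℕ) :
    HasDerivWithinAt (fun s => T s x j) (T t (A x) j) (Ici t) t := by
  rw [hasDerivWithinAt_iff_tendsto_slope, Ici_sdiff_left]
  have hmap : 𝓝[Ioi t] t = Filter.map (fun h : ℝ => t + h) (𝓝[Ioi (0:ℝ)] 0) := by
    have h1 := (Homeomorph.addLeft t).isEmbedding.map_nhdsWithin_eq (Ioi (0:ℝ)) 0
    simp only [Homeomorph.coe_addLeft] at h1
    rw [h1]
    norm_num [image_const_add_Ioi]
  rw [hmap, tendsto_map'_iff]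
  have key : ∀ h : ℝ, 0 < h →
      (slope (fun s => T s x j) t ∘ (fun h : ℝ => t + h)) h
        = (T t (h⁻¹ • (T h x - x))) j := by
    intro h hh
    have hTsum : T (t + h) x = T t (T h x) := by
      rw [hsemi t h ht hh.le]; rfl
    simp only [Function.comp_apply, slope, vsub_eq_sub, add_sub_cancel_left, hTsum,
      map_smul, map_sub, Pi.smul_apply, Pi.sub_apply, smul_eq_mul]
  have hcont : Tendsto (fun h : ℝ => (T t (h⁻¹ • (T h x - x))) j) (𝓝[>] (0:ℝ))
      (𝓝 (T t (A x) j)) :=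
    (((continuous_apply j).comp (T t).continuous).tendsto (A x)).comp (hgen x)
  refine hcont.congr' ?_
  filter_upwards [self_mem_nhdsWithin] with h hh
  exact (key h hh).symm

/-- The backward shift `A x = (x₁, x₂, x₃, …)` is a continuous
linear operator on `ω = ℝ^ℕ`, but it is not the generator of any strongly
continuous semigroup on `ω`. -/
theorem stmt9 (A : (ℕ → ℝ) → (ℕ → ℝ))
    (hA : ∀ (x : ℕ → ℝ) (j : ℕ), A x j = x (j + 1)) :
    (IsLinearMap ℝ A ∧ Continuous A) ∧
    ¬ ∃ T : ℝ → (ℕ → ℝ) →L[ℝ] (ℕ → ℝ),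
        T 0 = ContinuousLinearMap.id ℝ (ℕ → ℝ) ∧
        (∀ s t : ℝ, 0 ≤ s → 0 ≤ t → T (s + t) = (T s).comp (T t)) ∧
        (∀ x : ℕ → ℝ, ContinuousOn (fun t : ℝ => T t x) (Set.Ici 0)) ∧
        ∀ x : ℕ → ℝ,
          Tendsto (fun h : ℝ => h⁻¹ • (T h x - x)) (𝓝[>] 0) (𝓝 (A x)) := by
  have hAeq : A = fun x j => x (j + 1) := by
    funext x j; exact hA x j
  constructor
  · constructor
    · constructor
      · intro x y; funext j; simp [hA]
      · intro c x; funext j; simp [hA]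
    · rw [hAeq]
      exact continuous_pi fun j => continuous_apply (j + 1)
  rintro ⟨T, hT0, hsemi, hcont, hgen⟩
  -- basis vectors
  set e : ℕ → (ℕ → ℝ) := fun k => Pi.single k 1 with he
  have hAe0 : A (e 0) = 0 := by
    funext j; rw [hA]; simp [he, Pi.single_apply]
  have hAesucc : ∀ k, A (e (k + 1)) = e k := by
    intro k; funext j; rw [hA]
    simp only [he, Pi.single_apply]
    by_cases h : j = k <;> simp [h]
  -- u_k(t) = t^k / k! on [0,1]
  have main : ∀ k : ℕ, ∀ t ∈ Icc (0:ℝ) 1, T t (e k) 0 = t ^ k / k.factorial := by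
    intro k
    induction k with
    | zero =>
      refine eq_of_has_deriv_right_eq (E := ℝ) (f' := fun _ => (0:ℝ))
        (fun s hs => ?_) (fun s hs => by simpa using hasDerivWithinAt_const s (Ici s) (1:ℝ)) ?_ ?_ ?_
      · have := stmt9_deriv A T hsemi hgen (e 0) s hs.1 0
        rwa [hAe0, map_zero] at this
      · exact ((continuous_apply 0).comp_continuousOn (hcont (e 0))).mono
          (Icc_subset_Ici_self)
      · exact ((continuous_pow 0).div_const _).continuousOn
      · simp [hT0, he, Pi.single_apply]
    | succ k ih =>
      refine eq_of_has_deriv_right_eq (E := ℝ) (f' := fun s => s ^ k / k.factorial)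
        (fun s hs => ?_) (fun s hs => ?_) ?_ ?_ ?_
      · have := stmt9_deriv A T hsemi hgen (e (k + 1)) s hs.1 0
        rw [hAesucc k] at this
        rwa [ih s ⟨hs.1, hs.2.le⟩] at this
      · have h1 : HasDerivAt (fun t : ℝ => t ^ (k + 1) / (k + 1).factorial)
            (s ^ k / k.factorial) s := by
          have := (hasDerivAt_pow (k + 1) s).div_const ((k + 1).factorial : ℝ)
          refine this.congr_deriv ?_
          rw [Nat.factorial_succ]
          push_cast
          field_simp
        exact h1.hasDerivWithinAt
      · exact ((continuous_apply 0).comp_continuousOn (hcont (e (k + 1)))).mono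
          (Icc_subset_Ici_self)
      · exact (Continuous.div_const (continuous_pow (k + 1)) _).continuousOn
      · simp [hT0, he, Pi.single_apply]
  have key : ∀ N : ℕ, T 1 (e N) 0 = 1 / N.factorial := by
    intro N
    have := main N 1 ⟨zero_le_one, le_refl 1⟩
    simpa using this
  -- y_N = (N! * N) • e_N → 0, but T 1 (y N) 0 = N → ∞
  set y : ℕ → (ℕ → ℝ) := fun N => ((N.factorial : ℝ) * N) • e N with hy
  have hylim : Tendsto y atTop (𝓝 0) := by
    rw [tendsto_pi_nhds]
    intro j
    apply tendsto_atTop_of_eventually_const (i₀ := j + 1)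
    intro N hN
    simp only [hy, he, Pi.smul_apply, Pi.single_apply, smul_eq_mul, Pi.zero_apply]
    have : j ≠ N := by omega
    simp [this]
  have hTy : ∀ N : ℕ, T 1 (y N) 0 = N := by
    intro N
    simp only [hy, map_smul, Pi.smul_apply, smul_eq_mul]
    rw [key N]
    have hf : (N.factorial : ℝ) ≠ 0 := Nat.cast_ne_zero.mpr (Nat.factorial_ne_zero N)
    field_simp
  have h1 : Tendsto (fun N : ℕ => T 1 (y N) 0) atTop (𝓝 (T 1 (0 : ℕ → ℝ) 0)) :=
    (((continuous_apply 0).comp (T 1).continuous).tendsto 0).comp hylim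
  rw [map_zero] at h1
  simp only [hTy, Pi.zero_apply] at h1
  exact (tendsto_natCast_atTop_atTop (R := ℝ)).not_tendsto
    (disjoint_nhds_atTop 0).symm h1
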